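/- Let φ : ℕ → Option ℕ and let w : ℕ → ℂ be bounded. Then 0 is an eigenvalue of T_{w,φ} (i.e. T_{w,φ} is not injective on ℓ¹) if and only if φ is not injective, or there exists i ∈ ℕ with φ(i) = none, or there exists i ∈ ℕ with w(i) = 0. -/

import Mathlib

/-- Let `T` be the weighted shift-type operator on `ℓ¹` determined by `φ : ℕ → Option ℕ` and a
bounded weight `w` (i.e. `(T a)(j) = Σ_{i : φ(i) = some j} w(i)·a(i)`). Then `0` is an
eigenvalue of `T` (i.e. `T` is not injective) iff `φ` is not injective, or `φ(i) = none` for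
some `i`, or `w(i) = 0` for some `i`. -/
theorem stmt11 (φ : ℕ → Option ℕ) (w : ℕ → ℂ) (hw : ∃ C : ℝ, ∀ i, ‖w i‖ ≤ C)
    (T : lp (fun _ : ℕ => ℂ) 1 →L[ℂ] lp (fun _ : ℕ => ℂ) 1)
    (hT : ∀ (a : lp (fun _ : ℕ => ℂ) 1) (j : ℕ),
      T a j = ∑' i : {i : ℕ // φ i = some j}, w i * a i) :
    (∃ a : lp (fun _ : ℕ => ℂ) 1, a ≠ 0 ∧ T a = 0) ↔
      (¬ Function.Injective φ ∨ (∃ i : ℕ, φ i = none) ∨ (∃ i : ℕ, w i = 0)) := by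
  constructor
  · rintro ⟨a, ha0, hTa⟩
    by_contra hcon
    push_neg at hcon
    obtain ⟨hinj, hnone, hwne⟩ := hcon
    -- find a nonzero coordinate of a
    have : ∃ i, a i ≠ 0 := by
      by_contra h
      push_neg at h
      exact ha0 (lp.ext (funext h))
    obtain ⟨i, hai⟩ := this
    obtain ⟨j, hj⟩ : ∃ j, φ i = some j := by
      cases hφi : φ i with
      | none => exact absurd hφi (hnone i)
      | some j => exact ⟨j, rfl⟩
    have h0 : T a j = 0 := by rw [hTa]; rfl
    rw [hT a j] at h0
    have huniq : ∀ x : {i' : ℕ // φ i' = some j}, x = (⟨i, hj⟩ : {i' : ℕ // φ i' = some j}) := by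
      rintro ⟨x, hx⟩
      exact Subtype.ext (hinj (hx.trans hj.symm))
    rw [tsum_eq_single (⟨i, hj⟩ : {i' : ℕ // φ i' = some j})
      (fun x hx => absurd (huniq x) hx)] at h0
    exact (mul_ne_zero (hwne i) hai) h0
  · intro h
    -- helper: tsum over subtype of a pointwise-zero function is zero
    rcases h with hinj | ⟨i, hi⟩ | ⟨i, hi⟩
    · -- φ not injective
      rw [Function.not_injective_iff] at hinj
      obtain ⟨i₁, i₂, heq, hne⟩ := hinj
      by_cases hw2 : w i₂ = 0
      · -- use e_{i₂}
        refine ⟨lp.single 1 i₂ (1 : ℂ), ?_, ?_⟩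
        · intro h
          have := congrFun (congrArg (fun x : lp (fun _ : ℕ => ℂ) 1 => (x : ∀ _ : ℕ, ℂ)) h) i₂
          simp [lp.single_apply_self] at this
        · apply lp.ext
          funext j
          rw [hT]
          have : ∀ x : {i' : ℕ // φ i' = some j},
              w x * (lp.single 1 i₂ (1 : ℂ) : ∀ _ : ℕ, ℂ) x = 0 := by
            rintro ⟨x, hx⟩
            by_cases hxe : x = i₂
            · subst hxe; simp [lp.single_apply_self, hw2]
            · simp [lp.single_apply_ne 1 i₂ _ hxe, Pi.single_apply, hxe]
          rw [tsum_congr this, tsum_zero]; rfl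
      · -- use  w i₂ • e_{i₁} - w i₁ • e_{i₂}
        set a : lp (fun _ : ℕ => ℂ) 1 := lp.single 1 i₁ (w i₂) - lp.single 1 i₂ (w i₁) with ha
        have hcoe : ∀ k, a k =
            (lp.single 1 i₁ (w i₂) : ∀ _ : ℕ, ℂ) k - (lp.single 1 i₂ (w i₁) : ∀ _ : ℕ, ℂ) k := by
          intro k; rfl
        have ha1 : a i₁ = w i₂ := by
          rw [hcoe, lp.single_apply_self, lp.single_apply_ne 1 i₂ _ hne, sub_zero]
        have ha2 : a i₂ = -(w i₁) := by
          rw [hcoe, lp.single_apply_ne 1 i₁ _ (Ne.symm hne), lp.single_apply_self, zero_sub]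
        have haz : ∀ k, k ≠ i₁ → k ≠ i₂ → a k = 0 := by
          intro k h1 h2
          rw [hcoe, lp.single_apply_ne 1 i₁ _ h1, lp.single_apply_ne 1 i₂ _ h2, sub_zero]
        refine ⟨a, ?_, ?_⟩
        · intro h
          have : a i₁ = 0 := by rw [h]; rfl
          rw [ha1] at this
          exact hw2 this
        · apply lp.ext
          funext j
          rw [hT]
          by_cases hj : φ i₁ = some j
          · have hj2 : φ i₂ = some j := heq ▸ hj
            set x₁ : {i' : ℕ // φ i' = some j} := ⟨i₁, hj⟩
            set x₂ : {i' : ℕ // φ i' = some j} := ⟨i₂, hj2⟩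
            have hx12 : x₁ ≠ x₂ := fun h => hne (congrArg Subtype.val h)
            have hsum : ∑' x : {i' : ℕ // φ i' = some j}, w x * a x
                = ∑ x ∈ ({x₁, x₂} : Finset {i' : ℕ // φ i' = some j}), w x * a x := by
              apply tsum_eq_sum
              rintro ⟨x, hx⟩ hxmem
              simp only [Finset.mem_insert, Finset.mem_singleton] at hxmem
              push_neg at hxmem
              have h1 : x ≠ i₁ := fun h => hxmem.1 (Subtype.ext h)
              have h2 : x ≠ i₂ := fun h => hxmem.2 (Subtype.ext h)
              rw [haz x h1 h2, mul_zero]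
            rw [hsum, Finset.sum_pair hx12]
            show w i₁ * a i₁ + w i₂ * a i₂ = (0 : lp (fun _ : ℕ => ℂ) 1) j
            rw [ha1, ha2]
            show w i₁ * w i₂ + w i₂ * -w i₁ = 0
            ring
          · have : ∀ x : {i' : ℕ // φ i' = some j}, w x * a x = 0 := by
              rintro ⟨x, hx⟩
              have h1 : x ≠ i₁ := fun h => hj (h ▸ hx)
              have h2 : x ≠ i₂ := fun h => hj (heq ▸ (h ▸ hx))
              rw [haz x h1 h2, mul_zero]
            rw [tsum_congr this, tsum_zero]; rfl
    · -- φ i = none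
      refine ⟨lp.single 1 i (1 : ℂ), ?_, ?_⟩
      · intro h
        have := congrFun (congrArg (fun x : lp (fun _ : ℕ => ℂ) 1 => (x : ∀ _ : ℕ, ℂ)) h) i
        simp [lp.single_apply_self] at this
      · apply lp.ext
        funext j
        rw [hT]
        have : ∀ x : {i' : ℕ // φ i' = some j},
            w x * (lp.single 1 i (1 : ℂ) : ∀ _ : ℕ, ℂ) x = 0 := by
          rintro ⟨x, hx⟩
          have hxe : x ≠ i := fun h => by rw [h, hi] at hx; cases hx
          simp [lp.single_apply_ne 1 i _ hxe, Pi.single_apply, hxe]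
        rw [tsum_congr this, tsum_zero]; rfl
    · -- w i = 0
      refine ⟨lp.single 1 i (1 : ℂ), ?_, ?_⟩
      · intro h
        have := congrFun (congrArg (fun x : lp (fun _ : ℕ => ℂ) 1 => (x : ∀ _ : ℕ, ℂ)) h) i
        simp [lp.single_apply_self] at this
      · apply lp.ext
        funext j
        rw [hT]
        have : ∀ x : {i' : ℕ // φ i' = some j},
            w x * (lp.single 1 i (1 : ℂ) : ∀ _ : ℕ, ℂ) x = 0 := by
          rintro ⟨x, hx⟩
          by_cases hxe : x = i
          · subst hxe; simp [hi]
          · simp [lp.single_apply_ne 1 i _ hxe, Pi.single_apply, hxe]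
        rw [tsum_congr this, tsum_zero]; rfl
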